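/- Fix δ ∈ ℝ and a bounded self-adjoint non-negative operator B : X → X. The map B' ↦ F(B',δ) = C₀ − C₀A*(Γ + δ²MB'M* + AC₀A*)⁻¹AC₀, defined on the open subset of the Banach space of bounded operators on X consisting of those B' for which Γ + δ²MB'M* + AC₀A* is invertible, is Fréchet differentiable at B, and its derivative is the bounded linear map V ↦ δ² K(B,δ) M V M* K(B,δ)*, where K(B,δ) = C₀A*(Γ + δ²MBM* + AC₀A*)⁻¹. -/

import Mathlib

set_option maxHeartbeats 1600000
set_option synthInstance.maxHeartbeats 400000

open ContinuousLinearMap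
open scoped RealInnerProductSpace

/-- The operator `K(B,δ) = C₀ A* (Γ + δ² M B M* + A C₀ A*)⁻¹ : Y → X`. -/
noncomputable def Kop {X Y : Type*}
    [NormedAddCommGroup X] [InnerProductSpace ℝ X] [CompleteSpace X]
    [NormedAddCommGroup Y] [InnerProductSpace ℝ Y] [FiniteDimensional ℝ Y]
    (A M : X →L[ℝ] Y) (C₀ : X →L[ℝ] X) (Γ : Y →L[ℝ] Y)
    (B : X →L[ℝ] X) (δ : ℝ) : Y →L[ℝ] X :=
  C₀ ∘L (adjoint A) ∘L
    Ring.inverse (Γ + δ ^ 2 • (M ∘L B ∘L adjoint M) + A ∘L C₀ ∘L adjoint A)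

/-- The map `F(B,δ) = C₀ − C₀ A* (Γ + δ² M B M* + A C₀ A*)⁻¹ A C₀ = C₀ − K(B,δ) A C₀`. -/
noncomputable def Fop {X Y : Type*}
    [NormedAddCommGroup X] [InnerProductSpace ℝ X] [CompleteSpace X]
    [NormedAddCommGroup Y] [InnerProductSpace ℝ Y] [FiniteDimensional ℝ Y]
    (A M : X →L[ℝ] Y) (C₀ : X →L[ℝ] X) (Γ : Y →L[ℝ] Y)
    (B : X →L[ℝ] X) (δ : ℝ) : X →L[ℝ] X :=
  C₀ - (Kop A M C₀ Γ B δ) ∘L A ∘L C₀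

/-- The map `B' ↦ F(B',δ)` is Fréchet differentiable at every bounded self-adjoint non-negative
`B`, with derivative the bounded linear map `V ↦ δ² K(B,δ) M V M* K(B,δ)*`. -/
theorem stmt_1 {X Y : Type*}
    [NormedAddCommGroup X] [InnerProductSpace ℝ X] [CompleteSpace X]
    [NormedAddCommGroup Y] [InnerProductSpace ℝ Y] [FiniteDimensional ℝ Y]
    (A M : X →L[ℝ] Y) (C₀ : X →L[ℝ] X) (Γ : Y →L[ℝ] Y)
    (hC₀ : C₀.IsPositive) (hΓ : Γ.IsPositive)
    (hΓpos : ∀ y : Y, y ≠ 0 → 0 < ⟪Γ y, y⟫)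
    (B : X →L[ℝ] X) (hB : B.IsPositive) (δ : ℝ) :
    ∃ D : (X →L[ℝ] X) →L[ℝ] (X →L[ℝ] X),
      (∀ V : X →L[ℝ] X,
        D V = δ ^ 2 •
          ((Kop A M C₀ Γ B δ) ∘L M ∘L V ∘L (adjoint M) ∘L adjoint (Kop A M C₀ Γ B δ))) ∧
      HasFDerivAt (fun B' : X →L[ℝ] X => Fop A M C₀ Γ B' δ) D B := by
  -- the affine part and its linear part
  set L : (X →L[ℝ] X) →L[ℝ] (Y →L[ℝ] Y) :=
    δ ^ 2 • ((compL ℝ Y X Y M).comp ((compL ℝ Y X X).flip (adjoint M))) with hL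
  have hLapp : ∀ V : X →L[ℝ] X, L V = δ ^ 2 • (M ∘L V ∘L adjoint M) := fun V => rfl
  set G : (X →L[ℝ] X) → (Y →L[ℝ] Y) :=
    fun B' => Γ + δ ^ 2 • (M ∘L B' ∘L adjoint M) + A ∘L C₀ ∘L adjoint A with hG
  set g : (Y →L[ℝ] Y) := G B with hgdef
  -- g is a unit
  have hMBM : (M ∘L B ∘L adjoint M).IsPositive := hB.conj_adjoint M
  have hACA : (A ∘L C₀ ∘L adjoint A).IsPositive := hC₀.conj_adjoint A
  have hginj : ∀ y : Y, y ≠ 0 → g y ≠ 0 := by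
    intro y hy hzero
    have h1 : 0 < ⟪Γ y, y⟫ := hΓpos y hy
    have h2 : 0 ≤ ⟪(M ∘L B ∘L adjoint M) y, y⟫ := hMBM.inner_nonneg_left y
    have h3 : 0 ≤ ⟪(A ∘L C₀ ∘L adjoint A) y, y⟫ := hACA.inner_nonneg_left y
    have h4 : (0:ℝ) ≤ δ ^ 2 := sq_nonneg δ
    have : 0 < ⟪g y, y⟫ := by
      simp only [hgdef, hG, add_apply, smul_apply, inner_add_left, real_inner_smul_left]
      have := mul_nonneg h4 h2
      linarith
    rw [hzero] at this
    simp at this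
  have hgunit : IsUnit g := by
    rw [ContinuousLinearMap.isUnit_iff_bijective]
    have hker : LinearMap.ker (g : Y →ₗ[ℝ] Y) = ⊥ := by
      rw [LinearMap.ker_eq_bot']
      intro m hm
      by_contra hne
      exact hginj m hne hm
    have hinj : Function.Injective (g : Y →ₗ[ℝ] Y) := LinearMap.ker_eq_bot.mp hker
    exact ⟨hinj, (LinearMap.injective_iff_surjective).mp hinj⟩
  obtain ⟨u, hu⟩ := hgunit
  -- g is self-adjoint
  have hgsa : IsSelfAdjoint g := by
    have h1 : IsSelfAdjoint (δ ^ 2 • (M ∘L B ∘L adjoint M)) := by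
      rw [isSelfAdjoint_iff, star_smul, star_trivial, hMBM.isSelfAdjoint.star_eq]
    exact (hΓ.isSelfAdjoint.add h1).add hACA.isSelfAdjoint
  set w : Y →L[ℝ] Y := Ring.inverse g with hw
  have hwu : w = (↑u⁻¹ : Y →L[ℝ] Y) := by rw [hw, ← hu, Ring.inverse_unit]
  have hwsa : IsSelfAdjoint w := by
    rw [IsSelfAdjoint, hw, ← Ring.inverse_star, hgsa.star_eq]
  -- the outer linear map Φ : T ↦ (C₀ ∘ A†) ∘ T ∘ (A ∘ C₀)
  set Φ : (Y →L[ℝ] Y) →L[ℝ] (X →L[ℝ] X) :=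
    (compL ℝ X Y X (C₀ ∘L adjoint A)).comp ((compL ℝ X Y Y).flip (A ∘L C₀)) with hΦ
  have hΦapp : ∀ T : Y →L[ℝ] Y, Φ T = (C₀ ∘L adjoint A) ∘L T ∘L (A ∘L C₀) := fun T => rfl
  refine ⟨Φ.comp ((mulLeftRight ℝ (Y →L[ℝ] Y) w w).comp L), ?_, ?_⟩
  · intro V
    have hK : Kop A M C₀ Γ B δ = C₀ ∘L adjoint A ∘L w := rfl
    have hKadj : adjoint (Kop A M C₀ Γ B δ) = w ∘L A ∘L C₀ := by
      rw [hK, adjoint_comp, adjoint_comp, adjoint_adjoint, hwsa.adjoint_eq, hC₀.isSelfAdjoint.adjoint_eq, ← comp_assoc]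
    simp only [comp_apply, mulLeftRight_apply, hΦapp, hLapp, hK, hKadj]
    rw [mul_def, mul_def]
    ext x
    simp [comp_assoc, smul_apply, map_smul, hwsa.adjoint_eq, hC₀.isSelfAdjoint.adjoint_eq]
  · -- differentiability
    have hgaff : ∀ B' : X →L[ℝ] X, G B' = Γ + L B' + (A ∘L C₀ ∘L adjoint A) := by
      intro B'; rw [hLapp]
    have hDG : HasFDerivAt G L B := by
      have h := (L.hasFDerivAt (x := B)).const_add Γ
      have h2 := h.add_const (A ∘L C₀ ∘L adjoint A)
      exact h2
    have hDinv : HasFDerivAt Ring.inverse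
        (-(mulLeftRight ℝ (Y →L[ℝ] Y) ↑u⁻¹ ↑u⁻¹)) g := by
      have h := hasFDerivAt_ringInverse (𝕜 := ℝ) (R := Y →L[ℝ] Y) u
      rwa [hu] at h
    have hcomp : HasFDerivAt (fun B' => Ring.inverse (G B'))
        ((-(mulLeftRight ℝ (Y →L[ℝ] Y) ↑u⁻¹ ↑u⁻¹)).comp L) B := by
      have h := HasFDerivAt.comp (g := Ring.inverse) B hDinv hDG
      exact h
    have hΦc : HasFDerivAt (fun B' => Φ (Ring.inverse (G B')))
        (Φ.comp ((-(mulLeftRight ℝ (Y →L[ℝ] Y) ↑u⁻¹ ↑u⁻¹)).comp L)) B :=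
      (Φ.hasFDerivAt).comp B hcomp
    have hsub : HasFDerivAt (fun B' => C₀ - Φ (Ring.inverse (G B')))
        (-(Φ.comp ((-(mulLeftRight ℝ (Y →L[ℝ] Y) ↑u⁻¹ ↑u⁻¹)).comp L))) B :=
      hΦc.const_sub C₀
    have heq : (fun B' : X →L[ℝ] X => Fop A M C₀ Γ B' δ)
        = fun B' => C₀ - Φ (Ring.inverse (G B')) := by
      funext B'
      rw [Fop, Kop, hΦapp]
      congr 1
    have hDeq : -(Φ.comp ((-(mulLeftRight ℝ (Y →L[ℝ] Y) ↑u⁻¹ ↑u⁻¹)).comp L))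
        = Φ.comp ((mulLeftRight ℝ (Y →L[ℝ] Y) w w).comp L) := by
      rw [hwu]
      ext V x
      simp [comp_apply]
    rw [heq, ← hDeq]
    exact hsub
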